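/- Let 2 ≤ p ≤ q be real numbers, let u₁,…,uₙ and v₁,…,vₙ be nonnegative reals with uᵢ ≥ vᵢ for all i, and define φ(t) = (∑(uᵢ+tvᵢ)^p)^(q/p) + (∑(uᵢ−tvᵢ)^p)^(q/p) − 2^(q-1)((∑uᵢ^p)^(q/p) + t^q (∑vᵢ^p)^(q/p)) for t ∈ [0,1]. Then φ is monotone nondecreasing on [0,1]. -/

import Mathlib

/-- Superadditivity of `x ^ r` for `r ≥ 1` on nonnegative reals. -/
lemma aux_rpow_superadd {x y r : ℝ} (hx : 0 ≤ x) (hy : 0 ≤ y) (hr : 1 ≤ r) :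
    x ^ r + y ^ r ≤ (x + y) ^ r := by
  have hr0 : r ≠ 0 := by linarith
  have hxy : 0 ≤ x + y := by linarith
  have hx1 : x ^ r = x ^ (1:ℝ) * x ^ (r - 1) := by
    rw [← Real.rpow_add' hx (by simpa using hr0)]
    ring_nf
  have hy1 : y ^ r = y ^ (1:ℝ) * y ^ (r - 1) := by
    rw [← Real.rpow_add' hy (by simpa using hr0)]
    ring_nf
  have hxy1 : (x + y) ^ r = (x + y) ^ (1:ℝ) * (x + y) ^ (r - 1) := by
    rw [← Real.rpow_add' hxy (by simpa using hr0)]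
    ring_nf
  rw [hx1, hy1, hxy1, Real.rpow_one, Real.rpow_one, Real.rpow_one]
  have h1 : x ^ (r - 1) ≤ (x + y) ^ (r - 1) :=
    Real.rpow_le_rpow hx (by linarith) (by linarith)
  have h2 : y ^ (r - 1) ≤ (x + y) ^ (r - 1) :=
    Real.rpow_le_rpow hy (by linarith) (by linarith)
  have hxr : 0 ≤ x ^ (r - 1) := Real.rpow_nonneg hx _
  have hyr : 0 ≤ y ^ (r - 1) := Real.rpow_nonneg hy _
  nlinarith [mul_le_mul_of_nonneg_left h1 hx, mul_le_mul_of_nonneg_left h2 hy]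

theorem stmt10 (n : ℕ) (hn : 0 < n) (p q : ℝ) (hp : 2 ≤ p) (hpq : p ≤ q)
    (u v : Fin n → ℝ) (hv : ∀ i, 0 ≤ v i) (huv : ∀ i, v i ≤ u i) :
    MonotoneOn (fun t : ℝ =>
      (∑ i, (u i + t * v i) ^ p) ^ (q / p) + (∑ i, (u i - t * v i) ^ p) ^ (q / p) -
        2 ^ (q - 1) * ((∑ i, u i ^ p) ^ (q / p) + t ^ q * (∑ i, v i ^ p) ^ (q / p)))
      (Set.Icc 0 1) := by
  have hp0 : (0:ℝ) < p := by linarith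
  have hp1 : (1:ℝ) ≤ p := by linarith
  have hq1 : (1:ℝ) ≤ q := by linarith
  have hqp1 : (1:ℝ) ≤ q / p := (one_le_div hp0).mpr hpq
  set C : ℝ := ∑ i, v i ^ p with hC
  set D : ℝ := (∑ i, u i ^ p) ^ (q / p) with hD
  set A : ℝ → ℝ := fun t => ∑ i, (u i + t * v i) ^ p with hA
  set B : ℝ → ℝ := fun t => ∑ i, (u i - t * v i) ^ p with hB
  set a : ℝ → ℝ := fun t => ∑ i, (u i + t * v i) ^ (p - 1) * v i with ha
  set b : ℝ → ℝ := fun t => ∑ i, (u i - t * v i) ^ (p - 1) * v i with hb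
  set f' : ℝ → ℝ := fun t =>
    q / p * A t ^ (q / p - 1) * (p * a t) - q / p * B t ^ (q / p - 1) * (p * b t) -
      2 ^ (q - 1) * (q * t ^ (q - 1) * C ^ (q / p)) with hf'
  have hAd : ∀ t : ℝ, HasDerivAt A (p * a t) t := by
    intro t
    have h : HasDerivAt (fun t : ℝ => ∑ i, (u i + t * v i) ^ p)
        (∑ i, p * (u i + t * v i) ^ (p - 1) * v i) t := by
      apply HasDerivAt.fun_sum
      intro i _
      have h1 : HasDerivAt (fun t : ℝ => u i + t * v i) (v i) t := by
        simpa using ((hasDerivAt_id t).mul_const (v i)).const_add (u i)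
      have h2 := (Real.hasDerivAt_rpow_const (x := u i + t * v i) (p := p)
        (Or.inr hp1)).comp t h1
      exact h2.congr_deriv (by ring)
    convert h using 1
    rw [Finset.mul_sum]
    congr 1; funext i; ring
  have hBd : ∀ t : ℝ, HasDerivAt B (-(p * b t)) t := by
    intro t
    have h : HasDerivAt (fun t : ℝ => ∑ i, (u i - t * v i) ^ p)
        (∑ i, p * (u i - t * v i) ^ (p - 1) * (-v i)) t := by
      apply HasDerivAt.fun_sum
      intro i _
      have h1 : HasDerivAt (fun t : ℝ => u i - t * v i) (-v i) t := by
        simpa using ((hasDerivAt_id t).mul_const (v i)).const_sub (u i)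
      have h2 := (Real.hasDerivAt_rpow_const (x := u i - t * v i) (p := p)
        (Or.inr hp1)).comp t h1
      exact h2.congr_deriv (by ring)
    convert h using 1
    rw [neg_eq_iff_eq_neg, ← Finset.sum_neg_distrib, Finset.mul_sum]
    congr 1; funext i; ring
  have hfd : ∀ t : ℝ, HasDerivAt (fun t : ℝ =>
      A t ^ (q / p) + B t ^ (q / p) - 2 ^ (q - 1) * (D + t ^ q * C ^ (q / p))) (f' t) t := by
    intro t
    have h1 := (Real.hasDerivAt_rpow_const (x := A t) (p := q / p)
      (Or.inr hqp1)).comp t (hAd t)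
    have h2 := (Real.hasDerivAt_rpow_const (x := B t) (p := q / p)
      (Or.inr hqp1)).comp t (hBd t)
    have h3 : HasDerivAt (fun t : ℝ => D + t ^ q * C ^ (q / p))
        (q * t ^ (q - 1) * C ^ (q / p)) t := by
      exact (((Real.hasDerivAt_rpow_const (x := t) (p := q)
        (Or.inr hq1))).mul_const (C ^ (q / p))).const_add D
    have h1' : HasDerivAt (fun t : ℝ => A t ^ (q / p))
        (q / p * A t ^ (q / p - 1) * (p * a t)) t := by
      exact h1
    have h2' : HasDerivAt (fun t : ℝ => B t ^ (q / p))
        (q / p * B t ^ (q / p - 1) * -(p * b t)) t := by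
      exact h2
    have := ((h1'.add h2').sub (h3.const_mul ((2:ℝ) ^ (q - 1))))
    refine this.congr_deriv ?_
    rw [hf']
    ring
  -- main derivative nonnegativity
  have key : ∀ t ∈ Set.Ioo (0:ℝ) 1, 0 ≤ f' t := by
    intro t ht
    obtain ⟨ht0, ht1⟩ := ht
    have htv : ∀ i, t * v i ≤ u i := fun i =>
      le_trans (by nlinarith [hv i]) (huv i)
    have hplus : ∀ i, 0 ≤ u i + t * v i := fun i => by nlinarith [hv i, huv i]
    have hminus : ∀ i, 0 ≤ u i - t * v i := fun i => by nlinarith [htv i]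
    have hCnn : 0 ≤ C := Finset.sum_nonneg fun i _ => Real.rpow_nonneg (hv i) _
    have hAnn : 0 ≤ A t := Finset.sum_nonneg fun i _ => Real.rpow_nonneg (hplus i) _
    have hBnn : 0 ≤ B t := Finset.sum_nonneg fun i _ => Real.rpow_nonneg (hminus i) _
    have hbnn : 0 ≤ b t := Finset.sum_nonneg fun i _ =>
      mul_nonneg (Real.rpow_nonneg (hminus i) _) (hv i)
    have hBA : B t ≤ A t := Finset.sum_le_sum fun i _ =>
      Real.rpow_le_rpow (hminus i) (by nlinarith [hv i]) (by linarith)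
    have he : (0:ℝ) ≤ q / p - 1 := by linarith
    have h2t : (0:ℝ) < 2 * t := by linarith
    -- key1 : (2t)^(p-1) * C ≤ a t - b t
    have key1 : (2 * t) ^ (p - 1) * C ≤ a t - b t := by
      rw [hC, Finset.mul_sum, ha, hb, ← Finset.sum_sub_distrib]
      apply Finset.sum_le_sum
      intro i _
      have hsup := aux_rpow_superadd (x := u i - t * v i) (y := 2 * t * v i)
        (r := p - 1) (hminus i) (mul_nonneg h2t.le (hv i)) (by linarith)
      have heq : u i - t * v i + 2 * t * v i = u i + t * v i := by ring
      rw [heq] at hsup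
      have hvp : v i ^ p = v i ^ (p - 1) * v i := by
        rcases eq_or_lt_of_le (hv i) with h | h
        · rw [← h, Real.zero_rpow (by positivity : p ≠ 0),
            Real.zero_rpow (sub_ne_zero.mpr (by linarith : p ≠ 1))]
          ring
        · simpa using Real.rpow_add h (p - 1) 1
      have hmul : (2 * t * v i) ^ (p - 1) = (2 * t) ^ (p - 1) * v i ^ (p - 1) :=
        Real.mul_rpow h2t.le (hv i)
      have := mul_le_mul_of_nonneg_right hsup (hv i)
      rw [add_mul, hmul] at this
      calc (2 * t) ^ (p - 1) * v i ^ p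
          = (2 * t) ^ (p - 1) * v i ^ (p - 1) * v i := by rw [hvp]; ring
        _ ≤ (u i + t * v i) ^ (p - 1) * v i - (u i - t * v i) ^ (p - 1) * v i := by
            linarith
    -- key2 : (2t)^p * C ≤ A t
    have key2 : (2 * t) ^ p * C ≤ A t := by
      rw [hC, Finset.mul_sum, hA]
      apply Finset.sum_le_sum
      intro i _
      rw [← Real.mul_rpow h2t.le (hv i)]
      exact Real.rpow_le_rpow (mul_nonneg h2t.le (hv i)) (by nlinarith [hv i, htv i])
        (by linarith)
    have hanbn : (2 * t) ^ (p - 1) * C ≤ a t - b t := key1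
    -- combine
    have hstep1 : B t ^ (q / p - 1) * b t ≤ A t ^ (q / p - 1) * b t :=
      mul_le_mul_of_nonneg_right (Real.rpow_le_rpow hBnn hBA he) hbnn
    have hstep2 : ((2 * t) ^ p * C) ^ (q / p - 1) * ((2 * t) ^ (p - 1) * C) ≤
        A t ^ (q / p - 1) * (a t - b t) := by
      apply mul_le_mul (Real.rpow_le_rpow (by positivity) key2 he) key1 (by positivity)
        (Real.rpow_nonneg hAnn _)
    -- compute LHS of hstep2
    have e1 : ((2 * t) ^ p) ^ (q / p - 1) = (2 * t) ^ (q - p) := by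
      rw [← Real.rpow_mul h2t.le]
      congr 1
      field_simp
    have e2 : (2 * t) ^ (q - p) * (2 * t) ^ (p - 1) = (2 * t) ^ (q - 1) := by
      rw [← Real.rpow_add h2t]
      congr 1
      ring
    have e3 : C ^ (q / p - 1) * C = C ^ (q / p) := by
      nth_rewrite 2 [← Real.rpow_one C]
      rw [← Real.rpow_add' hCnn (by rw [sub_add_cancel]; positivity)]
      congr 1
      ring
    have e4 : (2 * t) ^ (q - 1) = 2 ^ (q - 1) * t ^ (q - 1) :=
      Real.mul_rpow (by norm_num) ht0.le
    have hcomp : ((2 * t) ^ p * C) ^ (q / p - 1) * ((2 * t) ^ (p - 1) * C) =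
        2 ^ (q - 1) * t ^ (q - 1) * C ^ (q / p) := by
      rw [Real.mul_rpow (by positivity) hCnn, e1]
      calc (2 * t) ^ (q - p) * C ^ (q / p - 1) * ((2 * t) ^ (p - 1) * C)
          = ((2 * t) ^ (q - p) * (2 * t) ^ (p - 1)) * (C ^ (q / p - 1) * C) := by ring
        _ = 2 ^ (q - 1) * t ^ (q - 1) * C ^ (q / p) := by rw [e2, e3, e4]
    rw [hcomp] at hstep2
    have msub : A t ^ (q / p - 1) * (a t - b t) =
        A t ^ (q / p - 1) * a t - A t ^ (q / p - 1) * b t := mul_sub _ _ _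
    have hmain : 2 ^ (q - 1) * t ^ (q - 1) * C ^ (q / p) ≤
        A t ^ (q / p - 1) * a t - B t ^ (q / p - 1) * b t := by
      rw [msub] at hstep2
      linarith
    have hfq : f' t = q * (A t ^ (q / p - 1) * a t - B t ^ (q / p - 1) * b t -
        2 ^ (q - 1) * t ^ (q - 1) * C ^ (q / p)) := by
      have hpq' : q / p * p = q := div_mul_cancel₀ q (ne_of_gt hp0)
      rw [hf']
      linear_combination (A t ^ (q / p - 1) * a t - B t ^ (q / p - 1) * b t) * hpq'
    rw [hfq]
    exact mul_nonneg (by linarith : (0:ℝ) ≤ q) (by linarith)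
  -- conclude
  have hfun : (fun t : ℝ =>
      (∑ i, (u i + t * v i) ^ p) ^ (q / p) + (∑ i, (u i - t * v i) ^ p) ^ (q / p) -
        2 ^ (q - 1) * ((∑ i, u i ^ p) ^ (q / p) + t ^ q * (∑ i, v i ^ p) ^ (q / p))) =
      (fun t : ℝ => A t ^ (q / p) + B t ^ (q / p) -
        2 ^ (q - 1) * (D + t ^ q * C ^ (q / p))) := by
    funext t
    simp only [hA, hB, hC, hD]
  rw [hfun]
  apply monotoneOn_of_deriv_nonneg (convex_Icc 0 1)
  · exact fun x _ => (hfd x).continuousAt.continuousWithinAt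
  · exact fun x _ => (hfd x).differentiableAt.differentiableWithinAt
  · intro x hx
    rw [interior_Icc] at hx
    rw [(hfd x).deriv]
    exact key x hx
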